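/- The $9 \times 9$ matrix $P_{CHSH}$ with $P_{00} = 1$, $P_{0i} = P_{i0} = P_{ii} = \chi$ for $i = 1, \ldots, 8$ where $\chi = (2+\sqrt{2})/8$, $P_{ij} = 0$ when $(i - j) \bmod 8 \in \{1, 7, 4\}$ (indices $1..8$ cyclic), $P_{ij} = \chi/2$ when $(i-j) \bmod 8 \in \{2, 6\}$, and $P_{ij} = (1+\sqrt{2})/8$ when $(i-j) \bmod 8 \in \{3, 5\}$, is positive semidefinite and satisfies $\sum_{i=1}^8 P_{ii} = 2 + \sqrt{2}$. -/

import Mathlib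

/-- The primal-optimal CHSH matrix `P_CHSH`, with `χ = (2+√2)/8` and `ξ = (1+√2)/8`. -/
noncomputable def Pchsh : Matrix (Fin 1 ⊕ ZMod 8) (Fin 1 ⊕ ZMod 8) ℝ :=
  Matrix.fromBlocks
    (fun _ _ => 1)
    (fun _ _ => (2 + Real.sqrt 2) / 8)
    (fun _ _ => (2 + Real.sqrt 2) / 8)
    (fun i j =>
      if i = j then (2 + Real.sqrt 2) / 8
      else if i - j = 1 ∨ i - j = -1 ∨ i - j = 4 then 0
      else if i - j = 2 ∨ i - j = -2 then ((2 + Real.sqrt 2) / 8) / 2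
      else (1 + Real.sqrt 2) / 8)

lemma zmod8_sum (f : ZMod 8 → ℝ) :
    ∑ i : ZMod 8, f i = f 0 + f 1 + f 2 + f 3 + f 4 + f 5 + f 6 + f 7 := by
  show ∑ i : Fin 8, f i = _
  exact Fin.sum_univ_eight f

set_option maxHeartbeats 1000000 in
lemma quad_nonneg (x : (Fin 1 ⊕ ZMod 8) → ℝ) :
    0 ≤ dotProduct (star x) (Pchsh.mulVec x) := by
  have h2 : Real.sqrt 2 * Real.sqrt 2 = 2 := Real.mul_self_sqrt (by norm_num)
  have key : dotProduct (star x) (Pchsh.mulVec x) =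
      (x (Sum.inl 0) + (2+Real.sqrt 2)/8 * (x (Sum.inr 0)+x (Sum.inr 1)+x (Sum.inr 2)+x (Sum.inr 3)+x (Sum.inr 4)+x (Sum.inr 5)+x (Sum.inr 6)+x (Sum.inr 7)))^2
      + (1/32) * (x (Sum.inr 0)-x (Sum.inr 1)+x (Sum.inr 2)-x (Sum.inr 3)+x (Sum.inr 4)-x (Sum.inr 5)+x (Sum.inr 6)-x (Sum.inr 7))^2
      + ((2+Real.sqrt 2)/16) * (x (Sum.inr 0) - Real.sqrt 2/2*x (Sum.inr 1) + Real.sqrt 2/2*x (Sum.inr 3) - x (Sum.inr 4) + Real.sqrt 2/2*x (Sum.inr 5) - Real.sqrt 2/2*x (Sum.inr 7))^2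
      + ((2+Real.sqrt 2)/16) * (Real.sqrt 2/2*x (Sum.inr 1) - x (Sum.inr 2) + Real.sqrt 2/2*x (Sum.inr 3) - Real.sqrt 2/2*x (Sum.inr 5) + x (Sum.inr 6) - Real.sqrt 2/2*x (Sum.inr 7))^2 := by
    simp only [Pchsh, dotProduct, Matrix.mulVec, Fintype.sum_sum_type,
      Matrix.fromBlocks, Matrix.of_apply, Sum.elim_inl, Sum.elim_inr, star_trivial,
      Fin.sum_univ_one, zmod8_sum]
    simp (config := { decide := true }) only [↓reduceIte]
    norm_num
    linear_combination ( - (5/64) * (x (Sum.inr 7)) * (x (Sum.inr 7)) + (1/32) * (x (Sum.inr 6)) * (x (Sum.inr 7)) - (1/64) * (x (Sum.inr 6)) * (x (Sum.inr 6)) - (1/32) * (x (Sum.inr 5)) * (x (Sum.inr 7)) + (1/32) * (x (Sum.inr 5)) * (x (Sum.inr 6)) - (5/64) * (x (Sum.inr 5)) * (x (Sum.inr 5)) - (3/32) * (x (Sum.inr 4)) * (x (Sum.inr 7)) - (1/32) * (x (Sum.inr 4)) * (x (Sum.inr 6)) + (1/32) * (x (Sum.inr 4)) * (x (Sum.inr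 5)) - (1/64) * (x (Sum.inr 4)) * (x (Sum.inr 4)) + (3/32) * (x (Sum.inr 3)) * (x (Sum.inr 7)) - (3/32) * (x (Sum.inr 3)) * (x (Sum.inr 6)) - (1/32) * (x (Sum.inr 3)) * (x (Sum.inr 5)) + (1/32) * (x (Sum.inr 3)) * (x (Sum.inr 4)) - (5/64) * (x (Sum.inr 3)) * (x (Sum.inr 3)) - (3/32) * (x (Sum.inr 2)) * (x (Sum.inr 7)) - (1/32) * (x (Sum.inr 2)) * (x (Sum.inr 6)) - (3/32) * (x (Sum.inr 2)) * (x (Sum.inr 5)) - (1/32) * (x (Sum.inr 2)) * (x (Sum.inr 4)) + (1/32) * (x (Sum.inr 2)) * (x (Sum.inr 3)) - (1/64) * (x (Sum.inr 2)) * (x (Sum.inr 2)) - (1/32) * (x (Sum.inr 1)) * (x (Sum.inr 7)) - (3/32) * (x (Sum.inr 1)) * (x (Sum.inr 6)) + (3/32) * (x (Sum.inr 1)) * (x (Sum.inr 5)) - (3/32) * (x (Sum.inr 1)) * (x (Sum.inr 4)) - (1/32) * (x (Sum.inr 1)) * (x (Sum.inr 3)) + (1/32) * (x (Sum.inr 1))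 * (x (Sum.inr 2)) - (5/64) * (x (Sum.inr 1)) * (x (Sum.inr 1)) + (1/32) * (x (Sum.inr 0)) * (x (Sum.inr 7)) - (1/32) * (x (Sum.inr 0)) * (x (Sum.inr 6)) - (3/32) * (x (Sum.inr 0)) * (x (Sum.inr 5)) - (1/32) * (x (Sum.inr 0)) * (x (Sum.inr 4)) - (3/32) * (x (Sum.inr 0)) * (x (Sum.inr 3)) - (1/32) * (x (Sum.inr 0)) * (x (Sum.inr 2)) + (1/32) * (x (Sum.inr 0)) * (x (Sum.inr 1)) - (1/64) * (x (Sum.inr 0)) * (x (Sum.inr 0)) - (1/32) * (Real.sqrt 2) * (x (Sum.inr 7)) * (x (Sum.inr 7)) - (1/32) * (Real.sqrt 2) * (x (Sum.inr 5)) * (x (Sum.inr 5)) + (1/16) * (Real.sqrt 2) * (x (Sum.inr 3)) * (x (Sum.inr 7)) - (1/32) * (Real.sqrt 2) * (x (Sum.inr 3)) * (x (Sum.inr 3)) + (1/16) * (Real.sqrt 2) * (x (Sum.inr 1)) * (x (Sum.inr 5)) - (1/32) * (Real.sqrt 2) * (x (Sum.inr 1)) * (x (Sum.inr 1))) * h2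
  rw [key]
  have hs : (0:ℝ) ≤ Real.sqrt 2 := Real.sqrt_nonneg 2
  positivity

lemma Pchsh_herm : Pchsh.IsHermitian := by
  rw [Matrix.IsHermitian]
  ext i j
  rcases i with i | i <;> rcases j with j | j <;>
    simp only [Pchsh, Matrix.conjTranspose_apply, Matrix.fromBlocks, Matrix.of_apply,
      Sum.elim_inl, Sum.elim_inr, star_trivial]
  fin_cases i <;> fin_cases j <;> rfl


/-- `P_CHSH` is positive semidefinite and its last eight diagonal entries sum to `2 + √2`. -/
theorem Pchsh_posSemidef_and_value :
    Pchsh.PosSemidef ∧ ∑ i : ZMod 8, Pchsh (Sum.inr i) (Sum.inr i) = 2 + Real.sqrt 2 := by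
  refine ⟨Matrix.PosSemidef.of_dotProduct_mulVec_nonneg Pchsh_herm quad_nonneg, ?_⟩
  rw [zmod8_sum]
  simp only [Pchsh, Matrix.fromBlocks, Matrix.of_apply, Sum.elim_inr, if_pos rfl]
  norm_num
  ring
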